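/- Let F be any field, m and n positive integers, and R an F-subalgebra of U_n^*(F) that is Lie nilpotent of index m. Then dim_F R ≤ M(m+1, n). -/

import Mathlib

/-- The left-normed iterated commutator `[x₁,…,x_k]*`. -/
def lieComm {R : Type*} [Ring R] (x : R) (xs : List R) : R :=
  xs.foldl (fun a b => a * b - b * a) x

/-- A ring is Lie nilpotent of index `m` if all left-normed commutators
of `m+1` elements vanish. -/
def IsLieNilpotentOfIndex (R : Type*) [Ring R] (m : ℕ) : Prop :=
  ∀ (x : R) (xs : List R), xs.length = m → lieComm x xs = 0

/-- The set of values `(n² − Σ kᵢ²)/2 + 1` over tuples of nonnegative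
integers summing to `n`; `M(ℓ,n)` is its greatest element. -/
def MSet (ℓ n : ℕ) : Set ℤ :=
  {d | ∃ k : Fin ℓ → ℕ, (∑ i, k i) = n ∧
    2 * (d - 1) = (n : ℤ) ^ 2 - ∑ i, ((k i : ℤ)) ^ 2}

/-- The set of upper triangular `n × n` matrices with constant main diagonal. -/
def UStarSet (F : Type*) [Field F] (n : ℕ) : Set (Matrix (Fin n) (Fin n) F) :=
  {A | (∀ i j : Fin n, j < i → A i j = 0) ∧ ∀ i j : Fin n, A i i = A j j}

section aux
variable {F : Type*} [Field F] {n : ℕ}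

/-- strictly upper triangular support -/
def SU (x : Matrix (Fin n) (Fin n) F) : Prop :=
  ∀ r u : Fin n, (u : ℕ) ≤ (r : ℕ) → x r u = 0

/-- `x` has leading (pivot) entry at position `(a,b)` w.r.t. the order by
(length, row). -/
def lo (x : Matrix (Fin n) (Fin n) F) (a b : Fin n) : Prop :=
  x a b ≠ 0 ∧ ∀ r u : Fin n,
    ((u : ℕ) + (a : ℕ) < (b : ℕ) + (r : ℕ) ∨
      ((u : ℕ) + (a : ℕ) = (b : ℕ) + (r : ℕ) ∧ (r : ℕ) < (a : ℕ))) → x r u = 0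

lemma SU.mul {x y : Matrix (Fin n) (Fin n) F} (hx : SU x) (hy : SU y) : SU (x * y) := by
  intro r u hur
  rw [Matrix.mul_apply]
  apply Finset.sum_eq_zero
  intro s _
  rcases le_or_gt (s : ℕ) (r : ℕ) with h | h
  · rw [hx r s h, zero_mul]
  · rw [hy s u (by omega), mul_zero]

lemma SU.sub {x y : Matrix (Fin n) (Fin n) F} (hx : SU x) (hy : SU y) : SU (x - y) := by
  intro r u h
  rw [Matrix.sub_apply, hx r u h, hy r u h, sub_zero]

lemma lo.supp {x : Matrix (Fin n) (Fin n) F} {a b : Fin n} (h : lo x a b)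
    {r u : Fin n} (hne : x r u ≠ 0) :
    (b : ℕ) + (r : ℕ) < (u : ℕ) + (a : ℕ) ∨
      ((u : ℕ) + (a : ℕ) = (b : ℕ) + (r : ℕ) ∧ (a : ℕ) ≤ (r : ℕ)) := by
  have := mt (h.2 r u) hne
  push_neg at this
  omega

lemma lo.lt {x : Matrix (Fin n) (Fin n) F} {a b : Fin n} (h : lo x a b) (hx : SU x) :
    (a : ℕ) < (b : ℕ) := by
  by_contra hc
  exact h.1 (hx a b (by omega))

lemma lo_bracket {x y : Matrix (Fin n) (Fin n) F} (hx : SU x) (hy : SU y)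
    {a b c : Fin n} (hxl : lo x a b) (hyl : lo y b c) :
    lo (x * y - y * x) a c := by
  have hab : (a : ℕ) < b := hxl.lt hx
  have hbc : (b : ℕ) < c := hyl.lt hy
  have claim1 : ∀ r u : Fin n,
      ((u : ℕ) + (a : ℕ) < (c : ℕ) + (r : ℕ) ∨
        ((u : ℕ) + (a : ℕ) = (c : ℕ) + (r : ℕ) ∧ (r : ℕ) < (a : ℕ))) → (x * y) r u = 0 := by
    intro r u hcond
    rw [Matrix.mul_apply]
    apply Finset.sum_eq_zero
    intro s _
    by_contra hne
    have h1 := hxl.supp (left_ne_zero_of_mul hne)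
    have h2 := hyl.supp (right_ne_zero_of_mul hne)
    omega
  have claim2 : (x * y) a c = x a b * y b c := by
    rw [Matrix.mul_apply]
    apply Finset.sum_eq_single
    · intro s _ hs
      by_contra hne
      have h1 := hxl.supp (left_ne_zero_of_mul hne)
      have h2 := hyl.supp (right_ne_zero_of_mul hne)
      have : (s : ℕ) ≠ (b : ℕ) := fun h => hs (Fin.ext h)
      omega
    · intro h
      exact absurd (Finset.mem_univ b) h
  have claim3 : ∀ r u : Fin n,
      ((u : ℕ) + (a : ℕ) < (c : ℕ) + (r : ℕ) ∨
        ((u : ℕ) + (a : ℕ) = (c : ℕ) + (r : ℕ) ∧ (r : ℕ) ≤ (a : ℕ))) → (y * x) r u = 0 := by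
    intro r u hcond
    rw [Matrix.mul_apply]
    apply Finset.sum_eq_zero
    intro s _
    by_contra hne
    have h1 := hyl.supp (left_ne_zero_of_mul hne)
    have h2 := hxl.supp (right_ne_zero_of_mul hne)
    omega
  constructor
  · rw [Matrix.sub_apply, claim2, claim3 a c (Or.inr ⟨rfl, le_rfl⟩), sub_zero]
    exact mul_ne_zero hxl.1 hyl.1
  · intro r u hcond
    rw [Matrix.sub_apply, claim1 r u hcond, claim3 r u (by omega), sub_zero]

/-- every nonzero strictly upper triangular matrix has a leading entry -/
lemma exists_lo {z : Matrix (Fin n) (Fin n) F} (hz : SU z) (hne : z ≠ 0) :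
    ∃ a b : Fin n, lo z a b := by
  classical
  have hex : ∃ p : Fin n × Fin n, z p.1 p.2 ≠ 0 := by
    by_contra h
    push_neg at h
    exact hne (Matrix.ext fun i j => h (i, j))
  obtain ⟨p0, hp0⟩ := hex
  set S : Finset (Fin n × Fin n) :=
    Finset.univ.filter (fun p : Fin n × Fin n => z p.1 p.2 ≠ 0) with hSdef
  have hSne : S.Nonempty := ⟨p0, by simp [hSdef, hp0]⟩
  obtain ⟨p, hpS, hpmin⟩ := Finset.exists_min_image S
    (fun p : Fin n × Fin n => ((p.2 : ℕ) - (p.1 : ℕ)) * n + (p.1 : ℕ)) hSne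
  have hpz : z p.1 p.2 ≠ 0 := by
    have := Finset.mem_filter.mp hpS
    exact this.2
  have hpab : (p.1 : ℕ) < (p.2 : ℕ) := by
    by_contra hc
    exact hpz (hz p.1 p.2 (by omega))
  refine ⟨p.1, p.2, hpz, ?_⟩
  intro r u hcond
  by_contra hru
  have hruS : (r, u) ∈ S := by simp [hSdef, hru]
  have hkey := hpmin (r, u) hruS
  simp only at hkey
  have hrult : (r : ℕ) < (u : ℕ) := by
    by_contra hc
    exact hru (hz r u (by omega))
  have hrn : (r : ℕ) < n := r.2
  rcases hcond with h | ⟨heq, hlt⟩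
  · -- strictly shorter length
    have hlen : (u : ℕ) - (r : ℕ) + 1 ≤ (p.2 : ℕ) - (p.1 : ℕ) := by omega
    have : ((u : ℕ) - (r : ℕ)) * n + (r : ℕ) < ((p.2 : ℕ) - (p.1 : ℕ)) * n + (p.1 : ℕ) := by
      calc ((u : ℕ) - (r : ℕ)) * n + (r : ℕ)
          < ((u : ℕ) - (r : ℕ)) * n + n := by omega
        _ = ((u : ℕ) - (r : ℕ) + 1) * n := by ring
        _ ≤ ((p.2 : ℕ) - (p.1 : ℕ)) * n := Nat.mul_le_mul_right n hlen
        _ ≤ ((p.2 : ℕ) - (p.1 : ℕ)) * n + (p.1 : ℕ) := Nat.le_add_right _ _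
    omega
  · -- same length, smaller row
    have hlen : (u : ℕ) - (r : ℕ) = (p.2 : ℕ) - (p.1 : ℕ) := by omega
    rw [hlen] at hkey
    omega

end aux

open Classical in
/-- length of the longest `E`-path ending at `b` (edges go strictly upward). -/
noncomputable def levOf (E : ℕ → ℕ → Prop) : ℕ → ℕ
  | b => (Finset.range b).attach.sup fun a =>
      if E a.1 b then levOf E a.1 + 1 else 0
termination_by b => b
decreasing_by exact Finset.mem_range.mp a.2

lemma levOf_lt {E : ℕ → ℕ → Prop} {a b : ℕ} (h : E a b) (hab : a < b) :
    levOf E a < levOf E b := by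
  classical
  conv_rhs => rw [levOf]
  refine lt_of_lt_of_le ?_
    (Finset.le_sup (Finset.mem_attach _ (⟨a, Finset.mem_range.mpr hab⟩ : {x // x ∈ Finset.range b})))
  rw [if_pos h]
  exact Nat.lt_succ_of_le le_rfl

lemma levOf_chain {E : ℕ → ℕ → Prop} :
    ∀ (k b : ℕ), k ≤ levOf E b → ∃ w : ℕ → ℕ, w k = b ∧ ∀ t < k, E (w t) (w (t + 1)) := by
  classical
  intro k
  induction k with
  | zero => exact fun b _ => ⟨fun _ => b, rfl, by omega⟩
  | succ k ih =>
    intro b hk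
    rw [levOf] at hk
    rw [Finset.le_sup_iff (by omega : (0:ℕ) < k + 1)] at hk
    obtain ⟨as, -, hfa⟩ := hk
    have hfa' : k + 1 ≤ if E as.1 b then levOf E as.1 + 1 else 0 := hfa
    by_cases hE : E as.1 b
    · rw [if_pos hE] at hfa'
      obtain ⟨w, hwk, hwe⟩ := ih as.1 (by omega)
      refine ⟨fun t => if t = k + 1 then b else w t, by simp, ?_⟩
      intro t ht
      rcases Nat.lt_or_ge t k with h | h
      · simpa [Nat.ne_of_lt (by omega : t < k+1), Nat.ne_of_lt (by omega : t+1 < k+1), Nat.ne_of_lt h]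
          using hwe t h
      · have : t = k := by omega
        subst this
        simpa [Nat.ne_of_lt (by omega : t < t+1), hwk] using hE
    · rw [if_neg hE] at hfa'; omega

section chain
variable {F : Type*} [Field F] {n m : ℕ}

lemma chain_contra (R : Subalgebra F (Matrix (Fin n) (Fin n) F))
    (hLie : IsLieNilpotentOfIndex ↥R m) (v : ℕ → Fin n)
    (x : ℕ → Matrix (Fin n) (Fin n) F)
    (hmem : ∀ t ≤ m, x t ∈ R) (hsu : ∀ t ≤ m, SU (x t))
    (hlo : ∀ t ≤ m, lo (x t) (v t) (v (t + 1))) : False := by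
  classical
  set x' : ℕ → Matrix (Fin n) (Fin n) F := fun t => if t ≤ m then x t else 0 with hx'
  have hx'mem : ∀ t, x' t ∈ R := by
    intro t
    by_cases h : t ≤ m
    · simpa [hx', h] using hmem t h
    · simp only [hx', if_neg h]; exact zero_mem _
  have hx'eq : ∀ t ≤ m, x' t = x t := fun t h => by simp [hx', h]
  set c : ℕ → Matrix (Fin n) (Fin n) F :=
    fun t => Nat.rec (x' 0) (fun t ct => ct * x' (t + 1) - x' (t + 1) * ct) t with hc
  have hcz : c 0 = x' 0 := rfl
  have hcs : ∀ t, c (t + 1) = c t * x' (t + 1) - x' (t + 1) * c t := fun t => rfl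
  have hcprop : ∀ t ≤ m, c t ∈ R ∧ SU (c t) ∧ lo (c t) (v 0) (v (t + 1)) := by
    intro t
    induction t with
    | zero =>
      intro h0
      rw [hcz, hx'eq 0 (by omega)]
      exact ⟨hmem 0 (by omega), hsu 0 (by omega), hlo 0 (by omega)⟩
    | succ t ih =>
      intro hts
      obtain ⟨h1, h2, h3⟩ := ih (by omega)
      rw [hcs, hx'eq (t + 1) hts]
      refine ⟨?_, ?_, ?_⟩
      · exact sub_mem (mul_mem h1 (hmem _ hts)) (mul_mem (hmem _ hts) h1)
      · exact (h2.mul (hsu _ hts)).sub ((hsu _ hts).mul h2)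
      · exact lo_bracket h2 (hsu _ hts) h3 (hlo _ hts)
  set XR : ℕ → ↥R := fun t => ⟨x' t, hx'mem t⟩ with hXR
  have hfold : ∀ k, ((lieComm (XR 0) ((List.range k).map fun t => XR (t + 1)) : ↥R) :
      Matrix (Fin n) (Fin n) F) = c k := by
    intro k
    induction k with
    | zero => rfl
    | succ k ih =>
      rw [List.range_succ, List.map_append, List.map_cons, List.map_nil]
      have : lieComm (XR 0) (((List.range k).map fun t => XR (t + 1)) ++ [XR (k + 1)]) =
          (lieComm (XR 0) ((List.range k).map fun t => XR (t + 1))) * XR (k + 1) -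
            XR (k + 1) * (lieComm (XR 0) ((List.range k).map fun t => XR (t + 1))) := by
        simp only [lieComm, List.foldl_append, List.foldl_cons, List.foldl_nil]
      rw [this, hcs]
      push_cast
      rw [ih]
  have h0 := hLie (XR 0) ((List.range m).map fun t => XR (t + 1)) (by simp)
  have hcm : c m = 0 := by
    rw [← hfold m, h0]
    rfl
  exact (hcprop m le_rfl).2.2.1 (by rw [hcm]; rfl)

end chain

set_option maxHeartbeats 1000000 in
set_option synthInstance.maxHeartbeats 400000 in
theorem stmt13 (F : Type*) [Field F] (m n : ℕ) (hm : 0 < m) (hn : 0 < n)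
    (R : Subalgebra F (Matrix (Fin n) (Fin n) F))
    (hR : (R : Set (Matrix (Fin n) (Fin n) F)) ⊆ UStarSet F n)
    (hLie : IsLieNilpotentOfIndex ↥R m)
    (M : ℤ) (hM : IsGreatest (MSet (m + 1) n) M) :
    (Module.finrank F ↥R : ℤ) ≤ M := by
  classical
  set i0 : Fin n := ⟨0, hn⟩ with hi0
  -- members of R with vanishing diagonal are strictly upper triangular
  have hSUmem : ∀ x ∈ R, x i0 i0 = 0 → SU x := by
    intro x hx h0 r u hur
    rcases lt_or_eq_of_le hur with h | h
    · exact (hR hx).1 r u h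
    · have : u = r := Fin.ext h
      subst this
      rw [(hR hx).2 u i0, h0]
  -- the edge relation
  let E : ℕ → ℕ → Prop := fun p q =>
    ∃ (hp : p < n) (hq : q < n) (x : Matrix (Fin n) (Fin n) F),
      x ∈ R ∧ SU x ∧ lo x ⟨p, hp⟩ ⟨q, hq⟩
  -- no chain of m+1 edges, so levels are at most m
  have hlev : ∀ b, levOf E b ≤ m := by
    intro b
    by_contra hb
    push_neg at hb
    obtain ⟨w, -, hw⟩ := levOf_chain (E := E) (m + 1) b (by omega)
    have hw2 : ∀ t, t ≤ m → ∃ (hp : w t < n) (hq : w (t + 1) < n)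
        (x : Matrix (Fin n) (Fin n) F),
        x ∈ R ∧ SU x ∧ lo x ⟨w t, hp⟩ ⟨w (t + 1), hq⟩ := fun t ht => hw t (by omega)
    choose hp hq xx hxmem hxsu hxlo using hw2
    have hwn : ∀ t, t ≤ m + 1 → w t < n := by
      intro t ht
      rcases Nat.lt_or_ge t (m + 1) with h | h
      · exact hp t (by omega)
      · have : t = m + 1 := by omega
        subst this
        exact hq m le_rfl
    refine chain_contra R hLie
      (fun t => if h : w t < n then (⟨w t, h⟩ : Fin n) else i0)
      (fun t => if h : t ≤ m then xx t h else 0) ?_ ?_ ?_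
    · intro t ht
      show (if h : t ≤ m then xx t h else 0) ∈ R
      rw [dif_pos ht]
      exact hxmem t ht
    · intro t ht
      show SU (if h : t ≤ m then xx t h else 0)
      rw [dif_pos ht]
      exact hxsu t ht
    · intro t ht
      show lo (if h : t ≤ m then xx t h else 0)
        (if h : w t < n then (⟨w t, h⟩ : Fin n) else i0)
        (if h : w (t + 1) < n then (⟨w (t + 1), h⟩ : Fin n) else i0)
      rw [dif_pos ht, dif_pos (hwn t (by omega)), dif_pos (hwn (t + 1) (by omega))]
      exact hxlo t ht
  -- the level map and fiber cardinalities
  set L : Fin n → Fin (m + 1) := fun i => ⟨levOf E (i : ℕ), Nat.lt_succ_of_le (hlev _)⟩ with hL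
  set cfun : Fin (m + 1) → ℕ :=
    fun p => (Finset.univ.filter fun i : Fin n => L i = p).card with hcfun
  have hsumc : ∑ p, cfun p = n := by
    simp only [hcfun]
    have := Finset.card_eq_sum_card_fiberwise
      (f := L) (s := Finset.univ) (t := Finset.univ)
      (fun (x : Fin n) (_ : x ∈ Finset.univ) => Finset.mem_univ (L x))
    simpa [Finset.card_univ] using this.symm
  -- pivot positions and level-increasing pairs
  set Pfin : Finset (Fin n × Fin n) := Finset.univ.filter
    (fun z : Fin n × Fin n => ∃ x, x ∈ R ∧ SU x ∧ lo x z.1 z.2) with hPfin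
  set T : Finset (Fin n × Fin n) := Finset.univ.filter
    (fun z : Fin n × Fin n => L z.1 < L z.2) with hT
  have hPT : Pfin ⊆ T := by
    intro z hz
    rw [hPfin, Finset.mem_filter] at hz
    obtain ⟨-, x, hxR, hxSU, hxlo⟩ := hz
    have hlt : (z.1 : ℕ) < (z.2 : ℕ) := hxlo.lt hxSU
    have hEz : E (z.1 : ℕ) (z.2 : ℕ) :=
      ⟨z.1.2, z.2.2, x, hxR, hxSU, by simpa [Fin.eta] using hxlo⟩
    rw [hT, Finset.mem_filter]
    refine ⟨Finset.mem_univ _, ?_⟩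
    simp only [hL, Fin.mk_lt_mk]
    exact levOf_lt hEz hlt
  -- cardinality of T via fibers over pairs of levels
  set Q : Finset (Fin (m + 1) × Fin (m + 1)) := Finset.univ.filter
    (fun z : Fin (m + 1) × Fin (m + 1) => z.1 < z.2) with hQ
  set s : ℕ := ∑ z ∈ Q, cfun z.1 * cfun z.2 with hs
  have hTQ : T.card = s := by
    have hfib := Finset.card_eq_sum_card_fiberwise
      (f := fun x : Fin n × Fin n => (L x.1, L x.2)) (s := T) (t := Q)
      (by
        intro x hx
        simp only [Finset.mem_coe, hT, hQ, Finset.mem_filter] at hx ⊢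
        exact ⟨Finset.mem_univ _, hx.2⟩)
    rw [hfib, hs]
    apply Finset.sum_congr rfl
    intro z hzQ
    have hzlt : z.1 < z.2 := by
      rw [hQ, Finset.mem_filter] at hzQ
      exact hzQ.2
    have heq : T.filter (fun x : Fin n × Fin n => (L x.1, L x.2) = z) =
        (Finset.univ.filter fun i : Fin n => L i = z.1) ×ˢ
          (Finset.univ.filter fun j : Fin n => L j = z.2) := by
      ext x
      simp only [Finset.mem_filter, Finset.mem_product, Finset.mem_univ, true_and, hT,
        Prod.ext_iff]
      constructor
      · rintro ⟨-, h1, h2⟩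
        exact ⟨h1, h2⟩
      · rintro ⟨h1, h2⟩
        exact ⟨by rw [h1, h2]; exact hzlt, h1, h2⟩
    rw [heq, Finset.card_product]
  -- the combinatorial identity  n² = Σ cᵢ² + 2s
  have hid : n ^ 2 = (∑ p, cfun p ^ 2) + 2 * s := by
    have h1 : (∑ p, cfun p) * (∑ q, cfun q) =
        ∑ z : Fin (m + 1) × Fin (m + 1), cfun z.1 * cfun z.2 := by
      rw [Fintype.sum_mul_sum]
      exact (Fintype.sum_prod_type
        (f := fun z : Fin (m + 1) × Fin (m + 1) => cfun z.1 * cfun z.2)).symm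
    have F1 : ((Finset.univ.filter (fun z : Fin (m+1) × Fin (m+1) => ¬ z.1 < z.2)).filter
        (fun z => z.2 < z.1)) =
        Finset.univ.filter (fun z : Fin (m+1) × Fin (m+1) => z.2 < z.1) := by
      rw [Finset.filter_filter]
      apply Finset.filter_congr
      intro z _
      constructor
      · rintro ⟨-, h⟩; exact h
      · intro h; exact ⟨lt_asymm h, h⟩
    have F2 : ((Finset.univ.filter (fun z : Fin (m+1) × Fin (m+1) => ¬ z.1 < z.2)).filter
        (fun z => ¬ z.2 < z.1)) =
        Finset.univ.filter (fun z : Fin (m+1) × Fin (m+1) => z.1 = z.2) := by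
      rw [Finset.filter_filter]
      apply Finset.filter_congr
      intro z _
      constructor
      · rintro ⟨h1, h2⟩; exact le_antisymm (not_lt.mp h2) (not_lt.mp h1)
      · intro h; exact ⟨by rw [h]; exact lt_irrefl _, by rw [h]; exact lt_irrefl _⟩
    have hswap : (∑ z ∈ Finset.univ.filter
        (fun z : Fin (m+1) × Fin (m+1) => z.2 < z.1), cfun z.1 * cfun z.2) = s := by
      rw [hs, hQ]
      refine Finset.sum_nbij' Prod.swap Prod.swap ?_ ?_ ?_ ?_ ?_
      · intro a ha
        simp only [Finset.mem_filter, Finset.mem_univ, true_and] at ha ⊢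
        exact ha
      · intro a ha
        simp only [Finset.mem_filter, Finset.mem_univ, true_and] at ha ⊢
        exact ha
      · intro a _; exact Prod.swap_swap a
      · intro a _; exact Prod.swap_swap a
      · intro a _; exact mul_comm _ _
    have hdiag : (∑ z ∈ Finset.univ.filter
        (fun z : Fin (m+1) × Fin (m+1) => z.1 = z.2), cfun z.1 * cfun z.2) =
        ∑ p, cfun p * cfun p := by
      refine Finset.sum_nbij' (fun z => z.1) (fun p => (p, p)) ?_ ?_ ?_ ?_ ?_
      · intro a _; exact Finset.mem_univ _
      · intro a _
        simp only [Finset.mem_filter, Finset.mem_univ, true_and]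
      · intro a ha
        simp only [Finset.mem_filter, Finset.mem_univ, true_and] at ha
        exact Prod.ext rfl ha
      · intro a _; rfl
      · intro a ha
        simp only [Finset.mem_filter, Finset.mem_univ, true_and] at ha
        show cfun a.1 * cfun a.2 = cfun a.1 * cfun a.1
        rw [ha]
    have htotal : (∑ z : Fin (m + 1) × Fin (m + 1), cfun z.1 * cfun z.2) =
        s + (s + ∑ p, cfun p * cfun p) := by
      rw [← Finset.sum_filter_add_sum_filter_not Finset.univ
        (fun z : Fin (m + 1) × Fin (m + 1) => z.1 < z.2)
        (fun z => cfun z.1 * cfun z.2)]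
      congr 1
      rw [← Finset.sum_filter_add_sum_filter_not (Finset.univ.filter
        (fun z : Fin (m + 1) × Fin (m + 1) => ¬ z.1 < z.2))
        (fun z => z.2 < z.1) (fun z => cfun z.1 * cfun z.2), F1, F2, hswap, hdiag]
    have hsq : n * n = s + (s + ∑ p, cfun p * cfun p) := by
      rw [← hsumc, h1, htotal]
    have hpow : (∑ p, cfun p ^ 2) = ∑ p, cfun p * cfun p := by
      apply Finset.sum_congr rfl
      intro p _
      ring
    rw [hpow]
    have : n ^ 2 = n * n := sq n
    omega
  -- finite dimensionality
  haveI hfd1 : FiniteDimensional F ↥(Subalgebra.toSubmodule R) := inferInstance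
  haveI hfd : FiniteDimensional F ↥R := Module.Finite.equiv (Subalgebra.toSubmoduleEquiv R)
  -- the diagonal functional
  set μ : ↥R →ₗ[F] F :=
    { toFun := fun x => ((x : Matrix (Fin n) (Fin n) F)) i0 i0
      map_add' := fun x y => by simp
      map_smul' := fun a x => by simp } with hμ
  have hrange : Module.finrank F (LinearMap.range μ) ≤ 1 := by
    have h := Submodule.finrank_le (LinearMap.range μ)
    simpa [Module.finrank_self] using h
  have hdim : Module.finrank F ↥R ≤ Module.finrank F (LinearMap.ker μ) + 1 := by
    have h := LinearMap.finrank_range_add_finrank_ker μ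
    omega
  -- injection of the kernel into functions on pivot positions
  set ψ : ↥(LinearMap.ker μ) →ₗ[F] (↥Pfin → F) :=
    { toFun := fun x => fun p => (((x : ↥R) : Matrix (Fin n) (Fin n) F)) p.1.1 p.1.2
      map_add' := fun x y => by funext p; simp
      map_smul' := fun a x => by funext p; simp } with hψ
  have hψinj : Function.Injective ψ := by
    rw [injective_iff_map_eq_zero]
    intro x hx
    by_contra hne0
    have hzR : ((x : ↥R) : Matrix (Fin n) (Fin n) F) ∈ R := (x : ↥R).2
    have hz0 : ((x : ↥R) : Matrix (Fin n) (Fin n) F) i0 i0 = 0 := LinearMap.mem_ker.mp x.2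
    have hzSU : SU ((x : ↥R) : Matrix (Fin n) (Fin n) F) := hSUmem _ hzR hz0
    have hzne : ((x : ↥R) : Matrix (Fin n) (Fin n) F) ≠ 0 := by
      intro h
      exact hne0 (Subtype.ext (Subtype.ext h))
    obtain ⟨a, b, hab⟩ := exists_lo hzSU hzne
    have hmemP : (a, b) ∈ Pfin := by
      rw [hPfin, Finset.mem_filter]
      exact ⟨Finset.mem_univ _, _, hzR, hzSU, hab⟩
    have hval := congrFun hx ⟨(a, b), hmemP⟩
    simp only [Pi.zero_apply] at hval
    exact hab.1 hval
  have hker : Module.finrank F ↥(LinearMap.ker μ) ≤ Pfin.card := by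
    have h := LinearMap.finrank_le_finrank_of_injective hψinj
    simpa [Module.finrank_fintype_fun_eq_card, Fintype.card_coe] using h
  have hcard : Pfin.card ≤ s := by
    rw [← hTQ]
    exact Finset.card_le_card hPT
  have hfinal : Module.finrank F ↥R ≤ s + 1 := by omega
  -- conclude via membership in MSet
  have hmem : ((s : ℤ) + 1) ∈ MSet (m + 1) n := by
    refine ⟨cfun, hsumc, ?_⟩
    have hcast : ((n : ℤ)) ^ 2 = (∑ p, (cfun p : ℤ) ^ 2) + 2 * (s : ℤ) := by
      exact_mod_cast hid
    linarith
  have hMs : (s : ℤ) + 1 ≤ M := hM.2 hmem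
  have : (Module.finrank F ↥R : ℤ) ≤ (s : ℤ) + 1 := by exact_mod_cast hfinal
  linarith
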